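/- Let C, R_A, R_B > 0, R₅ ≥ 0, V_DD > 0, and 0 ≤ Δ. Define C₁ = C(R₅+R_A)/R_A and C₂ = C(R₅(R_A+R_B)+R_A·R_B)/(R_A·R_B), and the concatenated trajectory V(t) = V_DD·e^{−t/(C₁R_A)} for t ∈ [0,Δ] and V(t) = V(Δ)·e^{−(1/(C₂R_A)+1/(C₂R_B))·(t−Δ)} for t > Δ. If Δ < log(2)·C₁·R_A, then the first time δ at which V(δ) = V_DD/2 satisfies δ = (log(2)·C₂·R_A·R_B − (C₂/C₁)·Δ·R_B)/(R_A + R_B) + Δ. -/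

import Mathlib

/-- Interconnect-augmented MIS falling delay formula (`δ_min = 0`): with effective
capacitances `C₁` and `C₂`, if `Δ < log 2 · C₁ · R_A` then the first time the
concatenated trajectory reaches `V_DD/2` is
`δ = (log 2 · C₂ · R_A · R_B − (C₂/C₁)·Δ·R_B)/(R_A + R_B) + Δ`. -/
theorem stmt_13 (C RA RB R₅ VDD Δ : ℝ) (hC : 0 < C) (hRA : 0 < RA) (hRB : 0 < RB)
    (hR₅ : 0 ≤ R₅) (hV : 0 < VDD) (hΔ : 0 ≤ Δ) :
    let C₁ : ℝ := C * (R₅ + RA) / RA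
    let C₂ : ℝ := C * (R₅ * (RA + RB) + RA * RB) / (RA * RB)
    ∀ V : ℝ → ℝ,
      (∀ t, 0 ≤ t → t ≤ Δ → V t = VDD * Real.exp (-t / (C₁ * RA))) →
      (∀ t, Δ < t → V t =
        (VDD * Real.exp (-Δ / (C₁ * RA))) *
          Real.exp (-(1 / (C₂ * RA) + 1 / (C₂ * RB)) * (t - Δ))) →
      Δ < Real.log 2 * C₁ * RA →
      IsLeast {t : ℝ | 0 ≤ t ∧ V t = VDD / 2}
        ((Real.log 2 * C₂ * RA * RB - (C₂ / C₁) * Δ * RB) / (RA + RB) + Δ) := by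
  intro C₁ C₂ V h1 h2 hlt
  have hC₁ : 0 < C₁ := by
    show 0 < C * (R₅ + RA) / RA
    positivity
  have hC₂ : 0 < C₂ := by
    show 0 < C * (R₅ * (RA + RB) + RA * RB) / (RA * RB)
    positivity
  clear_value C₁ C₂
  set k : ℝ := 1 / (C₂ * RA) + 1 / (C₂ * RB) with hk
  have hkpos : 0 < k := by rw [hk]; positivity
  set δ : ℝ := (Real.log 2 * C₂ * RA * RB - (C₂ / C₁) * Δ * RB) / (RA + RB) + Δ with hδ
  clear_value k δ
  have hRAB : 0 < RA + RB := by linarith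
  have hnum : (C₂ / C₁) * Δ * RB < Real.log 2 * C₂ * RA * RB := by
    have ha : (C₂ / C₁) * Δ * RB < (C₂ / C₁) * (Real.log 2 * C₁ * RA) * RB :=
      mul_lt_mul_of_pos_right (mul_lt_mul_of_pos_left hlt (div_pos hC₂ hC₁)) hRB
    have hb : (C₂ / C₁) * (Real.log 2 * C₁ * RA) * RB = Real.log 2 * C₂ * RA * RB := by
      field_simp
    linarith [hb.le, hb.ge]
  have hδΔ : Δ < δ := by
    have hq : 0 < (Real.log 2 * C₂ * RA * RB - (C₂ / C₁) * Δ * RB) / (RA + RB) :=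
      div_pos (by linarith) hRAB
    rw [hδ]; linarith
  have hkey : -Δ / (C₁ * RA) + -k * (δ - Δ) = -Real.log 2 := by
    rw [hδ, hk]
    field_simp
    ring
  have hhalf : Real.exp (-Real.log 2) = 1 / 2 := by
    rw [Real.exp_neg, Real.exp_log two_pos]
    norm_num
  have hVδ : V δ = VDD / 2 := by
    rw [h2 δ hδΔ, mul_assoc, ← Real.exp_add]
    rw [show -Δ / (C₁ * RA) + -k * (δ - Δ) = -Real.log 2 from hkey, hhalf]
    ring
  constructor
  · exact ⟨by linarith, hVδ⟩
  · rintro t ⟨ht0, hVt⟩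
    rcases le_or_gt t Δ with h | h
    · exfalso
      have hVt' := h1 t ht0 h
      have hexp : 1 / 2 < Real.exp (-t / (C₁ * RA)) := by
        rw [← hhalf]
        apply Real.exp_lt_exp.mpr
        rw [neg_div, neg_lt_neg_iff, div_lt_iff₀ (by positivity)]
        nlinarith
      have := hVt'.symm.trans hVt
      nlinarith [this, hexp, hV, mul_lt_mul_of_pos_left hexp hV]
    · have ht2 := h2 t h
      rw [hVt] at ht2
      have hcancel : Real.exp (-Δ / (C₁ * RA)) * Real.exp (-k * (t - Δ)) = 1 / 2 := by
        have hmm : VDD * (Real.exp (-Δ / (C₁ * RA)) * Real.exp (-k * (t - Δ))) = VDD * (1 / 2) := by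
          rw [← mul_assoc]; linarith [ht2]
        exact mul_left_cancel₀ (ne_of_gt hV) hmm
      have heq : Real.exp (-Δ / (C₁ * RA) + -k * (t - Δ)) = Real.exp (-Real.log 2) := by
        rw [hhalf, Real.exp_add]; exact hcancel
      have hexp_eq : -Δ / (C₁ * RA) + -k * (t - Δ) = -Real.log 2 := Real.exp_eq_exp.mp heq
      have hkt : k * (t - Δ) = k * (δ - Δ) := by linarith
      have := mul_left_cancel₀ (ne_of_gt hkpos) hkt
      linarith
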